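/- (Lemma 2.7, comparison principle.) Let h, l : [0,∞) → [0,∞) be continuous and let f, g : [0,∞) → [0,∞) be nondecreasing locally Lipschitz continuous functions. Let T > 0 and let u, v ∈ C([0,T], C_b(ℝ^N)) be solutions of problem (P) on [0,T] (with their respective initial data u(0) and v(0)). If u(0)(x) ≤ v(0)(x) for all x ∈ ℝ^N, then u(t)(x) ≤ v(t)(x) for all t ∈ [0,T] and all x ∈ ℝ^N. -/

import Mathlib

open MeasureTheory Real Set Metric Filter

noncomputable section

/-- `ℝ^N`. -/
abbrev EucN (N : ℕ) := EuclideanSpace ℝ (Fin N)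

/-- `C_b(ℝ^N)`, the bounded continuous functions with the sup norm. -/
abbrev CbN (N : ℕ) := BoundedContinuousFunction (EucN N) ℝ

/-- `u` is a (mild, nonnegative) solution of problem (P) on `[0,T]` with
initial data `u₀`, written pointwise via the kernel `Γ`. -/
def IsSolutionOnIcc (N : ℕ) (Γ : EucN N → EucN N → ℝ → ℝ)
    (h l f g : ℝ → ℝ) (u₀ : CbN N) (T : ℝ) (u : ℝ → CbN N) : Prop :=
  ContinuousOn u (Icc (0 : ℝ) T) ∧ u 0 = u₀ ∧
    (∀ t ∈ Icc (0 : ℝ) T, ∀ x, 0 ≤ u t x) ∧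
    ∀ t ∈ Ioc (0 : ℝ) T, ∀ x,
      u t x = (∫ y, Γ x y t * u₀ y) +
        ∫ σ in (0 : ℝ)..t, ∫ y, Γ x y (t - σ) *
          (h σ * f (u σ y) + l σ * g (u σ y))

/-- Lemma 2.7: comparison principle. -/
theorem comparison_principle
    (N : ℕ) (hN : 1 ≤ N) (α : ℝ) (hα0 : 0 ≤ α) (hα1 : α < 1)
    (Γ : EucN N → EucN N → ℝ → ℝ)
    (hΓmeas : Measurable fun p : EucN N × EucN N × ℝ => Γ p.1 p.2.1 p.2.2)
    (c₀ : ℝ) (hc₀ : 0 < c₀)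
    (hK1y : ∀ (x : EucN N) (t : ℝ), 0 < t → ∫ y, Γ x y t = 1)
    (hK1x : ∀ (y : EucN N) (t : ℝ), 0 < t → ∫ x, Γ x y t = 1)
    (hK2 : ∀ (x y : EucN N) (s t : ℝ), 0 < s → s < t →
      Γ x y t = ∫ ξ, Γ x ξ (t - s) * Γ ξ y s)
    (hK5 : ∀ (x y : EucN N) (t : ℝ), 0 < t →
      0 < Γ x y t ∧ Γ x y t ≤ c₀ * t ^ (-(N : ℝ) / (2 - α)))
    (S : ℝ → CbN N → CbN N)
    (hS0 : ∀ φ, S 0 φ = φ)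
    (hSΓ : ∀ (φ : CbN N) (t : ℝ), 0 < t → ∀ x, S t φ x = ∫ y, Γ x y t * φ y)
    (hK4 : ∀ φ : CbN N, ContinuousOn (fun t => S t φ) (Ici (0 : ℝ)))
    (h l : ℝ → ℝ)
    (hhcont : ContinuousOn h (Ici 0)) (hlcont : ContinuousOn l (Ici 0))
    (hhnn : ∀ t, 0 ≤ t → 0 ≤ h t) (hlnn : ∀ t, 0 ≤ t → 0 ≤ l t)
    (f g : ℝ → ℝ)
    (hfLip : ∀ M > (0 : ℝ), ∃ K : NNReal, LipschitzOnWith K f (Icc 0 M))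
    (hgLip : ∀ M > (0 : ℝ), ∃ K : NNReal, LipschitzOnWith K g (Icc 0 M))
    (hfnn : ∀ s, 0 ≤ s → 0 ≤ f s) (hgnn : ∀ s, 0 ≤ s → 0 ≤ g s)
    (hfmono : MonotoneOn f (Ici 0)) (hgmono : MonotoneOn g (Ici 0))
    (T : ℝ) (hT : 0 < T) (u v : ℝ → CbN N)
    (hu : IsSolutionOnIcc N Γ h l f g (u 0) T u)
    (hv : IsSolutionOnIcc N Γ h l f g (v 0) T v)
    (h0 : ∀ x, u 0 x ≤ v 0 x) :
    ∀ t ∈ Icc (0 : ℝ) T, ∀ x, u t x ≤ v t x := by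
  classical
  obtain ⟨hucont, -, hupos, hueq⟩ := hu
  obtain ⟨hvcont, -, hvpos, hveq⟩ := hv
  -- projection onto [0,T]
  set proj : ℝ → ℝ := fun s => max 0 (min s T) with hprojdef
  have hprojcont : Continuous proj := continuous_const.max (continuous_id.min continuous_const)
  have hprojmem : ∀ s, proj s ∈ Icc (0:ℝ) T :=
    fun s => ⟨le_max_left _ _, max_le hT.le (min_le_right _ _)⟩
  have hprojeq : ∀ s ∈ Icc (0:ℝ) T, proj s = s := by
    intro s hs
    simp only [hprojdef]
    rw [min_eq_left hs.2, max_eq_right hs.1]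
  -- global continuous versions of u, v
  have hU : Continuous (fun s => u (proj s)) := hucont.comp_continuous hprojcont hprojmem
  have hV : Continuous (fun s => v (proj s)) := hvcont.comp_continuous hprojcont hprojmem
  -- uniform bound M
  obtain ⟨Cu, hCu⟩ := isCompact_Icc.exists_bound_of_continuousOn hucont
  obtain ⟨Cv, hCv⟩ := isCompact_Icc.exists_bound_of_continuousOn hvcont
  set M : ℝ := max Cu Cv + 1 with hMdef
  have hCu0 : (0:ℝ) ≤ Cu := le_trans (norm_nonneg _) (hCu 0 ⟨le_rfl, hT.le⟩)
  have hM0 : (0:ℝ) < M := by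
    have : (0:ℝ) ≤ max Cu Cv := le_trans hCu0 (le_max_left _ _)
    linarith
  have humem : ∀ s ∈ Icc (0:ℝ) T, ∀ y, u s y ∈ Icc (0:ℝ) M := by
    intro s hs y
    refine ⟨hupos s hs y, ?_⟩
    have h1 : u s y ≤ ‖u s‖ :=
      le_trans (le_abs_self _) (by rw [← Real.norm_eq_abs]; exact (u s).norm_coe_le_norm y)
    have h2 := hCu s hs
    have : Cu ≤ max Cu Cv := le_max_left _ _
    simp only [hMdef]; linarith
  have hvmem : ∀ s ∈ Icc (0:ℝ) T, ∀ y, v s y ∈ Icc (0:ℝ) M := by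
    intro s hs y
    refine ⟨hvpos s hs y, ?_⟩
    have h1 : v s y ≤ ‖v s‖ :=
      le_trans (le_abs_self _) (by rw [← Real.norm_eq_abs]; exact (v s).norm_coe_le_norm y)
    have h2 := hCv s hs
    have : Cv ≤ max Cu Cv := le_max_right _ _
    simp only [hMdef]; linarith
  -- Lipschitz constants
  obtain ⟨Kf, hKf⟩ := hfLip M hM0
  obtain ⟨Kg, hKg⟩ := hgLip M hM0
  -- bounds on h, l on [0,T]
  obtain ⟨Ch, hCh⟩ := isCompact_Icc.exists_bound_of_continuousOn
    (hhcont.mono (fun s (hs : s ∈ Icc (0:ℝ) T) => hs.1))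
  obtain ⟨Cl, hCl⟩ := isCompact_Icc.exists_bound_of_continuousOn
    (hlcont.mono (fun s (hs : s ∈ Icc (0:ℝ) T) => hs.1))
  have hCh0 : (0:ℝ) ≤ Ch := le_trans (norm_nonneg _) (hCh 0 ⟨le_rfl, hT.le⟩)
  have hCl0 : (0:ℝ) ≤ Cl := le_trans (norm_nonneg _) (hCl 0 ⟨le_rfl, hT.le⟩)
  -- bounds on f, g on [0,M]
  set Bf : ℝ := |f 0| + Kf * M with hBfdef
  set Bg : ℝ := |g 0| + Kg * M with hBgdef
  have hmemM0 : (0:ℝ) ∈ Icc (0:ℝ) M := ⟨le_rfl, hM0.le⟩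
  have hBf : ∀ s ∈ Icc (0:ℝ) M, |f s| ≤ Bf := by
    intro s hs
    have := hKf.dist_le_mul s hs 0 hmemM0
    rw [Real.dist_eq, Real.dist_eq, sub_zero] at this
    have habs : |s| ≤ M := by rw [abs_of_nonneg hs.1]; exact hs.2
    have hKf0 : (0:ℝ) ≤ (Kf:ℝ) := Kf.coe_nonneg
    have h1 : |f s| ≤ |f s - f 0| + |f 0| := by
      have := abs_sub_abs_le_abs_sub (f s) (f 0)
      have := abs_add_le (f s - f 0) (f 0)
      calc |f s| = |f s - f 0 + f 0| := by ring_nf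
        _ ≤ |f s - f 0| + |f 0| := abs_add_le _ _
    have h2 : (Kf:ℝ) * |s| ≤ Kf * M := mul_le_mul_of_nonneg_left habs hKf0
    simp only [hBfdef]; linarith
  have hBg : ∀ s ∈ Icc (0:ℝ) M, |g s| ≤ Bg := by
    intro s hs
    have := hKg.dist_le_mul s hs 0 hmemM0
    rw [Real.dist_eq, Real.dist_eq, sub_zero] at this
    have habs : |s| ≤ M := by rw [abs_of_nonneg hs.1]; exact hs.2
    have hKg0 : (0:ℝ) ≤ (Kg:ℝ) := Kg.coe_nonneg
    have h1 : |g s| ≤ |g s - g 0| + |g 0| := by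
      calc |g s| = |g s - g 0 + g 0| := by ring_nf
        _ ≤ |g s - g 0| + |g 0| := abs_add_le _ _
    have h2 : (Kg:ℝ) * |s| ≤ Kg * M := mul_le_mul_of_nonneg_left habs hKg0
    simp only [hBgdef]; linarith
  set B : ℝ := Ch * Bf + Cl * Bg with hBdef
  set C : ℝ := Ch * Kf + Cl * Kg with hCdef
  have hC0 : (0:ℝ) ≤ C := by
    have := Kf.coe_nonneg; have := Kg.coe_nonneg
    simp only [hCdef]; positivity
  -- the comparison function w
  set w : ℝ → ℝ := fun s => ‖(u (proj s) - v (proj s)) ⊔ 0‖ with hwdef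
  have hw0 : ∀ s, 0 ≤ w s := fun s => norm_nonneg _
  have hposlip : LipschitzWith 1 (fun p : CbN N => p ⊔ 0) := by
    apply LipschitzWith.of_dist_le_mul
    intro a b
    rw [dist_eq_norm, dist_eq_norm, NNReal.coe_one, one_mul]
    refine (BoundedContinuousFunction.norm_le (norm_nonneg _)).2 (fun y => ?_)
    have : (a ⊔ 0 - b ⊔ 0) y = max (a y) 0 - max (b y) 0 := rfl
    rw [Real.norm_eq_abs, this]
    exact le_trans (abs_max_sub_max_le_abs _ _ _)
      (by rw [← Real.norm_eq_abs]; exact (a - b).norm_coe_le_norm y)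
  have hwcont : Continuous w :=
    continuous_norm.comp (hposlip.continuous.comp (hU.sub hV))
  have hwge : ∀ s ∈ Icc (0:ℝ) T, ∀ y, u s y - v s y ≤ w s := by
    intro s hs y
    have hp : proj s = s := hprojeq s hs
    have h1 : u s y - v s y ≤ ((u s - v s) ⊔ 0) y := le_max_left _ _
    have h2 : ((u s - v s) ⊔ 0) y ≤ ‖(u s - v s) ⊔ 0‖ :=
      le_trans (le_abs_self _)
        (by rw [← Real.norm_eq_abs]; exact ((u s - v s) ⊔ 0).norm_coe_le_norm y)
    simp only [hwdef, hp]
    exact le_trans h1 h2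
  have hwle : ∀ s ∈ Icc (0:ℝ) T, ∀ c : ℝ, 0 ≤ c → (∀ y, u s y - v s y ≤ c) → w s ≤ c := by
    intro s hs c hc hall
    have hp : proj s = s := hprojeq s hs
    simp only [hwdef, hp]
    refine (BoundedContinuousFunction.norm_le hc).2 (fun y => ?_)
    have : ((u s - v s) ⊔ 0) y = max (u s y - v s y) 0 := rfl
    rw [Real.norm_eq_abs, this, abs_of_nonneg (le_max_right _ _)]
    exact max_le (hall y) hc
  -- kernel integrability
  have hΓint : ∀ (x : EucN N) (s : ℝ), 0 < s → Integrable (fun y => Γ x y s) := by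
    intro x s hs
    by_contra h'
    have h1 := hK1y x s hs
    rw [integral_undef h'] at h1
    norm_num at h1
  have hΓm : ∀ (x : EucN N) (s : ℝ), Measurable (fun y => Γ x y s) := fun x s =>
    hΓmeas.comp (measurable_const.prodMk (measurable_id.prodMk measurable_const))
  -- generic integrability of Γ·F for bounded measurable F
  have key_int : ∀ (x : EucN N) (s : ℝ), 0 < s → ∀ (F : EucN N → ℝ) (Bd : ℝ),
      AEStronglyMeasurable F volume → (∀ y, |F y| ≤ Bd) →
      Integrable (fun y => Γ x y s * F y) := by
    intro x s hs F Bd hFm hFb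
    have := (hΓint x s hs).bdd_mul (c := Bd) hFm (Filter.Eventually.of_forall fun y => by rw [Real.norm_eq_abs]; exact hFb y)
    simpa [mul_comm] using this
  have key_mono : ∀ (x : EucN N) (s : ℝ), 0 < s → ∀ (F : EucN N → ℝ) (Bd : ℝ),
      Integrable (fun y => Γ x y s * F y) → (∀ y, F y ≤ Bd) →
      (∫ y, Γ x y s * F y) ≤ Bd := by
    intro x s hs F Bd hint hFb
    calc (∫ y, Γ x y s * F y) ≤ ∫ y, Γ x y s * Bd :=
        integral_mono hint ((hΓint x s hs).mul_const Bd)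
          (fun y => mul_le_mul_of_nonneg_left (hFb y) (hK5 x y s hs).1.le)
      _ = Bd := by rw [integral_mul_const, hK1y x s hs, one_mul]
  have key_abs : ∀ (x : EucN N) (s : ℝ), 0 < s → ∀ (F : EucN N → ℝ) (Bd : ℝ),
      AEStronglyMeasurable F volume → (∀ y, |F y| ≤ Bd) →
      |∫ y, Γ x y s * F y| ≤ Bd := by
    intro x s hs F Bd hFm hFb
    have hint := key_int x s hs F Bd hFm hFb
    calc |∫ y, Γ x y s * F y| ≤ ∫ y, |Γ x y s * F y| := by
          rw [← Real.norm_eq_abs]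
          refine (norm_integral_le_integral_norm _).trans (le_of_eq ?_)
          simp only [Real.norm_eq_abs]
      _ ≤ ∫ y, Γ x y s * Bd := by
          refine integral_mono hint.abs ((hΓint x s hs).mul_const Bd) (fun y => ?_)
          have hpos := (hK5 x y s hs).1
          rw [abs_mul, abs_of_pos hpos]
          exact mul_le_mul_of_nonneg_left (hFb y) hpos.le
      _ = Bd := by rw [integral_mul_const, hK1y x s hs, one_mul]
  -- global measurable/bounded versions of the nonlinear terms
  set Fu : ℝ × EucN N → ℝ := fun p =>
    h (proj p.1) * f (u (proj p.1) p.2) + l (proj p.1) * g (u (proj p.1) p.2) with hFudef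
  set Fv : ℝ × EucN N → ℝ := fun p =>
    h (proj p.1) * f (v (proj p.1) p.2) + l (proj p.1) * g (v (proj p.1) p.2) with hFvdef
  have hhproj : Continuous (fun s => h (proj s)) :=
    hhcont.comp_continuous hprojcont (fun s => (hprojmem s).1)
  have hlproj : Continuous (fun s => l (proj s)) :=
    hlcont.comp_continuous hprojcont (fun s => (hprojmem s).1)
  have hUev : Continuous (fun p : ℝ × EucN N => u (proj p.1) p.2) :=
    ContinuousEval.continuous_eval.comp ((hU.comp continuous_fst).prodMk continuous_snd)
  have hVev : Continuous (fun p : ℝ × EucN N => v (proj p.1) p.2) :=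
    ContinuousEval.continuous_eval.comp ((hV.comp continuous_fst).prodMk continuous_snd)
  have hUmem : ∀ p : ℝ × EucN N, u (proj p.1) p.2 ∈ Icc (0:ℝ) M :=
    fun p => humem (proj p.1) (hprojmem p.1) p.2
  have hVmem : ∀ p : ℝ × EucN N, v (proj p.1) p.2 ∈ Icc (0:ℝ) M :=
    fun p => hvmem (proj p.1) (hprojmem p.1) p.2
  have hFucont : Continuous Fu := by
    refine ((hhproj.comp continuous_fst).mul
      (hKf.continuousOn.comp_continuous hUev hUmem)).add
      ((hlproj.comp continuous_fst).mul (hKg.continuousOn.comp_continuous hUev hUmem))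
  have hFvcont : Continuous Fv := by
    refine ((hhproj.comp continuous_fst).mul
      (hKf.continuousOn.comp_continuous hVev hVmem)).add
      ((hlproj.comp continuous_fst).mul (hKg.continuousOn.comp_continuous hVev hVmem))
  have habsmul : ∀ a b c d : ℝ, |a| ≤ c → |b| ≤ d → |a * b| ≤ c * d := by
    intro a b c d hac hbd
    rw [abs_mul]
    exact mul_le_mul hac hbd (abs_nonneg _) (le_trans (abs_nonneg _) hac)
  have hFubd : ∀ p, |Fu p| ≤ B := by
    intro p
    have h1 : |h (proj p.1) * f (u (proj p.1) p.2)| ≤ Ch * Bf :=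
      habsmul _ _ _ _ (by rw [← Real.norm_eq_abs]; exact hCh _ (hprojmem p.1))
        (hBf _ (hUmem p))
    have h2 : |l (proj p.1) * g (u (proj p.1) p.2)| ≤ Cl * Bg :=
      habsmul _ _ _ _ (by rw [← Real.norm_eq_abs]; exact hCl _ (hprojmem p.1))
        (hBg _ (hUmem p))
    simp only [hFudef, hBdef]
    exact le_trans (abs_add_le _ _) (add_le_add h1 h2)
  have hFvbd : ∀ p, |Fv p| ≤ B := by
    intro p
    have h1 : |h (proj p.1) * f (v (proj p.1) p.2)| ≤ Ch * Bf :=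
      habsmul _ _ _ _ (by rw [← Real.norm_eq_abs]; exact hCh _ (hprojmem p.1))
        (hBf _ (hVmem p))
    have h2 : |l (proj p.1) * g (v (proj p.1) p.2)| ≤ Cl * Bg :=
      habsmul _ _ _ _ (by rw [← Real.norm_eq_abs]; exact hCl _ (hprojmem p.1))
        (hBg _ (hVmem p))
    simp only [hFvdef, hBdef]
    exact le_trans (abs_add_le _ _) (add_le_add h1 h2)
  -- pointwise comparison of nonlinearities
  have hFdiff : ∀ s ∈ Icc (0:ℝ) T, ∀ y, Fu (s, y) - Fv (s, y) ≤ C * w s := by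
    intro s hs y
    have hp : proj s = s := hprojeq s hs
    have huy := humem s hs y
    have hvy := hvmem s hs y
    have hwsy := hwge s hs y
    have hws0 := hw0 s
    have hf1 : f (u s y) - f (v s y) ≤ Kf * w s := by
      by_cases hc : u s y ≤ v s y
      · have := hfmono huy.1 hvy.1 hc
        have : f (u s y) - f (v s y) ≤ 0 := by linarith
        exact le_trans this (by positivity)
      · push_neg at hc
        have hd := hKf.dist_le_mul _ huy _ hvy
        rw [Real.dist_eq, Real.dist_eq] at hd
        have h1 : f (u s y) - f (v s y) ≤ |f (u s y) - f (v s y)| := le_abs_self _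
        have h2 : |u s y - v s y| = u s y - v s y := abs_of_pos (by linarith)
        have h3 : (Kf:ℝ) * (u s y - v s y) ≤ Kf * w s :=
          mul_le_mul_of_nonneg_left hwsy Kf.coe_nonneg
        rw [h2] at hd
        linarith
    have hg1 : g (u s y) - g (v s y) ≤ Kg * w s := by
      by_cases hc : u s y ≤ v s y
      · have := hgmono huy.1 hvy.1 hc
        have : g (u s y) - g (v s y) ≤ 0 := by linarith
        exact le_trans this (by positivity)
      · push_neg at hc
        have hd := hKg.dist_le_mul _ huy _ hvy
        rw [Real.dist_eq, Real.dist_eq] at hd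
        have h1 : g (u s y) - g (v s y) ≤ |g (u s y) - g (v s y)| := le_abs_self _
        have h2 : |u s y - v s y| = u s y - v s y := abs_of_pos (by linarith)
        have h3 : (Kg:ℝ) * (u s y - v s y) ≤ Kg * w s :=
          mul_le_mul_of_nonneg_left hwsy Kg.coe_nonneg
        rw [h2] at hd
        linarith
    have hhs : 0 ≤ h s := hhnn s hs.1
    have hls : 0 ≤ l s := hlnn s hs.1
    have hhsC : h s ≤ Ch := le_trans (le_abs_self _)
      (by rw [← Real.norm_eq_abs]; exact hCh s hs)
    have hlsC : l s ≤ Cl := le_trans (le_abs_self _)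
      (by rw [← Real.norm_eq_abs]; exact hCl s hs)
    have e1 : h s * (f (u s y) - f (v s y)) ≤ Ch * (Kf * w s) := by
      calc h s * (f (u s y) - f (v s y)) ≤ h s * (Kf * w s) :=
            mul_le_mul_of_nonneg_left hf1 hhs
        _ ≤ Ch * (Kf * w s) := mul_le_mul_of_nonneg_right hhsC (by positivity)
    have e2 : l s * (g (u s y) - g (v s y)) ≤ Cl * (Kg * w s) := by
      calc l s * (g (u s y) - g (v s y)) ≤ l s * (Kg * w s) :=
            mul_le_mul_of_nonneg_left hg1 hls
        _ ≤ Cl * (Kg * w s) := mul_le_mul_of_nonneg_right hlsC (by positivity)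
    have : Fu (s, y) - Fv (s, y) =
        h s * (f (u s y) - f (v s y)) + l s * (g (u s y) - g (v s y)) := by
      simp only [hFudef, hFvdef, hp]; ring
    rw [this]
    simp only [hCdef]
    calc h s * (f (u s y) - f (v s y)) + l s * (g (u s y) - g (v s y))
        ≤ Ch * (Kf * w s) + Cl * (Kg * w s) := add_le_add e1 e2
      _ = (Ch * ↑Kf + Cl * ↑Kg) * w s := by ring
  -- main estimate
  have key : ∀ t ∈ Ioc (0:ℝ) T, ∀ x : EucN N,
      u t x - v t x ≤ C * ∫ σ in (0:ℝ)..t, w σ := by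
    intro t ht x
    have ht0 : 0 < t := ht.1
    -- initial-data term
    have hu0int : Integrable (fun y => Γ x y t * u 0 y) :=
      key_int x t ht0 _ ‖u 0‖ (u 0).continuous.measurable.aestronglyMeasurable
        (fun y => by rw [← Real.norm_eq_abs]; exact (u 0).norm_coe_le_norm y)
    have hv0int : Integrable (fun y => Γ x y t * v 0 y) :=
      key_int x t ht0 _ ‖v 0‖ (v 0).continuous.measurable.aestronglyMeasurable
        (fun y => by rw [← Real.norm_eq_abs]; exact (v 0).norm_coe_le_norm y)
    have hA : (∫ y, Γ x y t * u 0 y) ≤ ∫ y, Γ x y t * v 0 y :=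
      integral_mono hu0int hv0int
        (fun y => mul_le_mul_of_nonneg_left (h0 y) (hK5 x y t ht0).1.le)
    -- Duhamel terms
    set Gu : ℝ → ℝ := fun σ => ∫ y, Γ x y (t - σ) *
      (h σ * f (u σ y) + l σ * g (u σ y)) with hGudef
    set Gv : ℝ → ℝ := fun σ => ∫ y, Γ x y (t - σ) *
      (h σ * f (v σ y) + l σ * g (v σ y)) with hGvdef
    set Iu : ℝ → ℝ := fun σ => ∫ y, Γ x y (t - σ) * Fu (σ, y) with hIudef
    set Iv : ℝ → ℝ := fun σ => ∫ y, Γ x y (t - σ) * Fv (σ, y) with hIvdef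
    have hmemIcc : ∀ σ ∈ Ioo (0:ℝ) t, σ ∈ Icc (0:ℝ) T :=
      fun σ hσ => ⟨hσ.1.le, le_trans hσ.2.le ht.2⟩
    have heqGu : ∀ σ ∈ Ioo (0:ℝ) t, Gu σ = Iu σ := by
      intro σ hσ
      have hp : proj σ = σ := hprojeq σ (hmemIcc σ hσ)
      simp only [hGudef, hIudef, hFudef, hp]
    have heqGv : ∀ σ ∈ Ioo (0:ℝ) t, Gv σ = Iv σ := by
      intro σ hσ
      have hp : proj σ = σ := hprojeq σ (hmemIcc σ hσ)
      simp only [hGvdef, hIvdef, hFvdef, hp]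
    -- measurability of Iu, Iv
    have hker : Measurable (fun p : ℝ × EucN N => Γ x p.2 (t - p.1)) :=
      hΓmeas.comp (measurable_const.prodMk
        (measurable_snd.prodMk (measurable_const.sub measurable_fst)))
    have hIum : StronglyMeasurable Iu :=
      ((hker.mul hFucont.measurable).stronglyMeasurable).integral_prod_right'
    have hIvm : StronglyMeasurable Iv :=
      ((hker.mul hFvcont.measurable).stronglyMeasurable).integral_prod_right'
    -- bounds on Iu, Iv on Ioo 0 t
    have hIub : ∀ σ ∈ Ioo (0:ℝ) t, |Iu σ| ≤ B := by
      intro σ hσ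
      exact key_abs x (t - σ) (by linarith [hσ.2]) _ B
        (hFucont.comp (Continuous.prodMk_right σ)).measurable.aestronglyMeasurable
        (fun y => hFubd (σ, y))
    have hIvb : ∀ σ ∈ Ioo (0:ℝ) t, |Iv σ| ≤ B := by
      intro σ hσ
      exact key_abs x (t - σ) (by linarith [hσ.2]) _ B
        (hFvcont.comp (Continuous.prodMk_right σ)).measurable.aestronglyMeasurable
        (fun y => hFvbd (σ, y))
    -- integrability on Ioc 0 t
    have hrestr : volume.restrict (Ioc (0:ℝ) t) = volume.restrict (Ioo (0:ℝ) t) :=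
      (Measure.restrict_congr_set Ioo_ae_eq_Ioc).symm
    have hIuint : IntegrableOn Iu (Ioc (0:ℝ) t) := by
      rw [IntegrableOn, hrestr]
      refine Integrable.mono' (integrable_const B) hIum.aestronglyMeasurable ?_
      filter_upwards [ae_restrict_mem measurableSet_Ioo] with σ hσ
      rw [Real.norm_eq_abs]; exact hIub σ hσ
    have hIvint : IntegrableOn Iv (Ioc (0:ℝ) t) := by
      rw [IntegrableOn, hrestr]
      refine Integrable.mono' (integrable_const B) hIvm.aestronglyMeasurable ?_
      filter_upwards [ae_restrict_mem measurableSet_Ioo] with σ hσ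
      rw [Real.norm_eq_abs]; exact hIvb σ hσ
    have haeGu : Gu =ᵐ[volume.restrict (Ioc (0:ℝ) t)] Iu := by
      rw [hrestr]
      filter_upwards [ae_restrict_mem measurableSet_Ioo] with σ hσ
      exact heqGu σ hσ
    have haeGv : Gv =ᵐ[volume.restrict (Ioc (0:ℝ) t)] Iv := by
      rw [hrestr]
      filter_upwards [ae_restrict_mem measurableSet_Ioo] with σ hσ
      exact heqGv σ hσ
    have hGuint : IntervalIntegrable Gu volume 0 t := by
      rw [intervalIntegrable_iff_integrableOn_Ioc_of_le ht0.le]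
      exact hIuint.congr haeGu.symm
    have hGvint : IntervalIntegrable Gv volume 0 t := by
      rw [intervalIntegrable_iff_integrableOn_Ioc_of_le ht0.le]
      exact hIvint.congr haeGv.symm
    -- pointwise comparison of Gu and Gv on Ioo 0 t
    have hGpt : ∀ σ ∈ Ioo (0:ℝ) t, Gu σ - Gv σ ≤ C * w σ := by
      intro σ hσ
      have hs : (0:ℝ) < t - σ := by linarith [hσ.2]
      have hσIcc := hmemIcc σ hσ
      have hp : proj σ = σ := hprojeq σ hσIcc
      have hintu : Integrable (fun y => Γ x y (t - σ) * Fu (σ, y)) :=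
        key_int x (t - σ) hs _ B
          (hFucont.comp (Continuous.prodMk_right σ)).measurable.aestronglyMeasurable
          (fun y => hFubd (σ, y))
      have hintv : Integrable (fun y => Γ x y (t - σ) * Fv (σ, y)) :=
        key_int x (t - σ) hs _ B
          (hFvcont.comp (Continuous.prodMk_right σ)).measurable.aestronglyMeasurable
          (fun y => hFvbd (σ, y))
      have hsub : Gu σ - Gv σ = ∫ y, Γ x y (t - σ) * (Fu (σ, y) - Fv (σ, y)) := by
        rw [heqGu σ hσ, heqGv σ hσ]
        simp only [hIudef, hIvdef]
        rw [← integral_sub hintu hintv]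
        congr 1; ext y; ring
      rw [hsub]
      refine key_mono x (t - σ) hs _ (C * w σ) ?_ (fun y => hFdiff σ hσIcc y)
      have : (fun y => Γ x y (t - σ) * (Fu (σ, y) - Fv (σ, y))) =
          fun y => Γ x y (t - σ) * Fu (σ, y) - Γ x y (t - σ) * Fv (σ, y) := by
        ext y; ring
      rw [this]
      exact hintu.sub hintv
    -- integrate
    have hwint : IntervalIntegrable w volume 0 t := hwcont.intervalIntegrable 0 t
    have hB : (∫ σ in (0:ℝ)..t, Gu σ) - (∫ σ in (0:ℝ)..t, Gv σ) ≤
        C * ∫ σ in (0:ℝ)..t, w σ := by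
      rw [← intervalIntegral.integral_sub hGuint hGvint, ← intervalIntegral.integral_const_mul]
      rw [intervalIntegral.integral_of_le ht0.le, intervalIntegral.integral_of_le ht0.le]
      rw [integral_Ioc_eq_integral_Ioo, integral_Ioc_eq_integral_Ioo]
      refine setIntegral_mono_on ?_ ?_ measurableSet_Ioo (fun σ hσ => hGpt σ hσ)
      · exact ((intervalIntegrable_iff_integrableOn_Ioc_of_le ht0.le).1
          (hGuint.sub hGvint)).mono_set Ioo_subset_Ioc_self
      · exact ((continuous_const.mul hwcont).integrableOn_Icc).mono_set Ioo_subset_Icc_self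
    have hu_eq := hueq t ht x
    have hv_eq := hveq t ht x
    rw [hu_eq, hv_eq]
    simp only [← hGudef, ← hGvdef]
    linarith
  -- Gronwall
  set W : ℝ → ℝ := fun r => ∫ σ in (0:ℝ)..r, w σ with hWdef
  have hWd : ∀ r : ℝ, HasDerivAt W (w r) r := by
    intro r
    exact intervalIntegral.integral_hasDerivAt_right (hwcont.intervalIntegrable 0 r)
      hwcont.stronglyMeasurable.stronglyMeasurableAtFilter hwcont.continuousAt
  have hW0 : W 0 = 0 := intervalIntegral.integral_same
  have hWnn : ∀ r, 0 ≤ r → 0 ≤ W r := by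
    intro r hr
    exact intervalIntegral.integral_nonneg hr (fun σ _ => hw0 σ)
  have hw0T : w 0 = 0 := by
    have h1 : w 0 ≤ 0 := hwle 0 ⟨le_rfl, hT.le⟩ 0 le_rfl (fun y => by linarith [h0 y])
    linarith [hw0 0]
  have hwleW : ∀ r ∈ Icc (0:ℝ) T, w r ≤ C * W r := by
    intro r hr
    rcases eq_or_lt_of_le hr.1 with h | h
    · rw [← h, hw0T, hW0, mul_zero]
    · have hWr : 0 ≤ W r := hWnn r hr.1
      exact hwle r hr (C * W r) (by positivity)
        (fun y => key r ⟨h, hr.2⟩ y)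
  have hgron : ∀ r ∈ Icc (0:ℝ) T, ‖W r‖ ≤ gronwallBound 0 C 0 (r - 0) := by
    refine norm_le_gronwallBound_of_norm_deriv_right_le
      (fun r _ => (hWd r).continuousAt.continuousWithinAt)
      (fun r _ => (hWd r).hasDerivWithinAt) (by rw [hW0, norm_zero]) ?_
    intro r hr
    have h1 := hwleW r ⟨hr.1, hr.2.le⟩
    rw [Real.norm_eq_abs, Real.norm_eq_abs, abs_of_nonneg (hw0 r),
      abs_of_nonneg (hWnn r hr.1), add_zero]
    exact h1
  intro t ht x
  have hWt : W t = 0 := by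
    have := hgron t ht
    rw [gronwallBound_ε0, Real.norm_eq_abs, abs_of_nonneg (hWnn t ht.1)] at this
    have h2 := hWnn t ht.1
    nlinarith [Real.exp_pos (C * (t - 0))]
  have hwt : w t ≤ 0 := by
    have := hwleW t ht
    rw [hWt, mul_zero] at this
    exact this
  have := hwge t ht x
  linarith
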